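/- Assume additionally that for every 0 < ε < λ_min − 1 there exists C > 0 such that C⁻¹‖x‖^{ln q/(n·ln(λ_max+ε))} ≤ w(x) ≤ C‖x‖^{ln q/(n·ln(λ_min−ε))} whenever ‖x‖ > 1 and C⁻¹‖x‖^{ln q/(n·ln(λ_min−ε))} ≤ w(x) ≤ C‖x‖^{ln q/(n·ln(λ_max+ε))} whenever ‖x‖ ≤ 1, where λ_max and λ_min denote the maximal and minimal moduli of the eigenvalues of A (these bounds hold for the He–Lau pseudo norm). Then for every subset E ⊆ ℝⁿ, (ln q/(n·ln λ_max))·dim_H^w E ≤ dim_H E ≤ (ln q/(n·ln λ_min))·dim_H^w E, where dim_H E denotes the classical Hausdorff dimension of E with respect to the Euclidean metric. -/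

import Mathlib

open MeasureTheory Set ENNReal NNReal

noncomputable section

/-- Points of `ℝⁿ` with the Euclidean norm. -/
abbrev Pt (n : ℕ) := EuclideanSpace ℝ (Fin n)

/-- The action of an `n × n` real matrix on Euclidean space. -/
def mapp {n : ℕ} (A : Matrix (Fin n) (Fin n) ℝ) (x : Pt n) : Pt n :=
  Matrix.toEuclideanLin A x

/-- A real matrix is expanding if all of its (complex) eigenvalues have modulus `> 1`. -/
def IsExpandingMatrix {n : ℕ} (A : Matrix (Fin n) (Fin n) ℝ) : Prop :=
  ∀ μ ∈ spectrum ℂ (A.map (fun a => (a : ℂ))), 1 < ‖μ‖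

/-- The diameter of a set with respect to the pseudo norm `w`. -/
def pdiam {n : ℕ} (w : Pt n → ℝ) (E : Set (Pt n)) : ℝ≥0∞ :=
  ⨆ (x ∈ E) (y ∈ E), ENNReal.ofReal (w (x - y))

/-- The `δ`-approximation of the `s`-dimensional pseudo Hausdorff measure. -/
def preHw {n : ℕ} (w : Pt n → ℝ) (s δ : ℝ) (E : Set (Pt n)) : ℝ≥0∞ :=
  ⨅ (U : ℕ → Set (Pt n)) (_ : E ⊆ ⋃ i, U i)
    (_ : ∀ i, pdiam w (U i) ≤ ENNReal.ofReal δ), ∑' i, pdiam w (U i) ^ s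

/-- The `s`-dimensional pseudo Hausdorff measure w.r.t. the pseudo norm `w`. -/
def Hw {n : ℕ} (w : Pt n → ℝ) (s : ℝ) (E : Set (Pt n)) : ℝ≥0∞ :=
  ⨆ (δ : ℝ) (_ : 0 < δ), preHw w s δ E

/-- Carathéodory measurability with respect to the outer measure `Hw w s`. -/
def HwMeasurable {n : ℕ} (w : Pt n → ℝ) (s : ℝ) (E : Set (Pt n)) : Prop :=
  ∀ T : Set (Pt n), Hw w s T = Hw w s (T ∩ E) + Hw w s (T \ E)

/-- A pseudo norm associated with the expanding matrix `A`. -/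
structure IsPseudoNorm {n : ℕ} (A : Matrix (Fin n) (Fin n) ℝ) (w : Pt n → ℝ) : Prop where
  continuous : Continuous w
  nonneg : ∀ x, 0 ≤ w x
  neg : ∀ x, w (-x) = w x
  eq_zero_iff : ∀ x, w x = 0 ↔ x = 0
  scaling : ∀ x, w (mapp A x) = |A.det| ^ ((1 : ℝ) / n) * w x
  quasi_triangle : ∃ β > (0 : ℝ), ∀ x y, w (x + y) ≤ β * max (w x) (w y)
  comparable : ∃ C > (0 : ℝ), ∃ α₁ > (0 : ℝ), ∃ α₂ > (0 : ℝ),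
    (∀ x : Pt n, 1 < ‖x‖ → C⁻¹ * ‖x‖ ^ α₁ ≤ w x ∧ w x ≤ C * ‖x‖ ^ α₂) ∧
    (∀ x : Pt n, ‖x‖ ≤ 1 → C⁻¹ * ‖x‖ ^ α₂ ≤ w x ∧ w x ≤ C * ‖x‖ ^ α₁)

/-- The map `f_d(x) = A⁻¹(x + d)` of the self-affine IFS. -/
def fIFS {n : ℕ} (A : Matrix (Fin n) (Fin n) ℝ) (d : Pt n) (x : Pt n) : Pt n :=
  mapp A⁻¹ (x + d)

/-- The open set condition for the IFS `{f_d}_{d ∈ D}`. -/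
def OSC {n : ℕ} (A : Matrix (Fin n) (Fin n) ℝ) (D : Finset (Pt n)) : Prop :=
  ∃ V : Set (Pt n), V.Nonempty ∧ IsOpen V ∧ Bornology.IsBounded V ∧
    (⋃ d ∈ D, fIFS A d '' V) ⊆ V ∧
    ∀ d ∈ D, ∀ d' ∈ D, d ≠ d' → fIFS A d '' V ∩ fIFS A d' '' V = ∅

/-- `K` is the self-affine set (attractor) for the pair `(A, D)`:
a nonempty compact set with `A K = ⋃_{d ∈ D} (K + d)`. -/
def IsSelfAffineSet {n : ℕ} (A : Matrix (Fin n) (Fin n) ℝ) (D : Finset (Pt n))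
    (K : Set (Pt n)) : Prop :=
  K.Nonempty ∧ IsCompact K ∧ mapp A '' K = ⋃ d ∈ D, (fun x => x + d) '' K

/-- The set `𝒟_M` of `M`-fold expansions `Σ_{j<M} A^j d_j`. -/
def DsetM {n : ℕ} (A : Matrix (Fin n) (Fin n) ℝ) (D : Finset (Pt n)) (M : ℕ) :
    Set (Pt n) :=
  {x | ∃ d : Fin M → Pt n, (∀ j, d j ∈ D) ∧ x = ∑ j : Fin M, mapp (A ^ (j : ℕ)) (d j)}

/-- The set `𝒟_∞ = ⋃_{M ≥ 1} 𝒟_M`. -/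
def DsetInf {n : ℕ} (A : Matrix (Fin n) (Fin n) ℝ) (D : Finset (Pt n)) : Set (Pt n) :=
  ⋃ (M : ℕ) (_ : 1 ≤ M), DsetM A D M

/-- A set is uniformly discrete if distinct points are uniformly separated. -/
def UniformlyDiscrete {n : ℕ} (S : Set (Pt n)) : Prop :=
  ∃ δ > (0 : ℝ), ∀ x ∈ S, ∀ y ∈ S, x ≠ y → δ < ‖x - y‖

/-- `σ` is the invariant (self-affine) probability measure of the IFS `{f_d}_{d ∈ D}`. -/
def IsInvariantMeasure {n : ℕ} (A : Matrix (Fin n) (Fin n) ℝ) (D : Finset (Pt n))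
    (σ : Measure (Pt n)) : Prop :=
  IsProbabilityMeasure σ ∧
  ∀ f : Pt n → ℝ, Continuous f → HasCompactSupport f →
    ∫ x, f x ∂σ = ((D.card : ℝ))⁻¹ * ∑ d ∈ D, ∫ x, f (fIFS A d x) ∂σ

/-- The measure `μ_M = Σ_{d_0,…,d_{M−1} ∈ 𝒟} δ_{d_0 + A d_1 + ⋯ + A^{M−1} d_{M−1}}`. -/
def muM {n : ℕ} (A : Matrix (Fin n) (Fin n) ℝ) (D : Finset (Pt n)) (M : ℕ) :
    Measure (Pt n) :=
  ∑ d ∈ (Finset.univ : Finset (Fin M → {x : Pt n // x ∈ D})),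
    Measure.dirac (∑ j : Fin M, mapp (A ^ (j : ℕ)) ((d j : Pt n)))

/-- Convolution of two Borel measures on `ℝⁿ`. -/
def mconv {n : ℕ} (μ ν : Measure (Pt n)) : Measure (Pt n) :=
  Measure.map (fun p : Pt n × Pt n => p.1 + p.2) (μ.prod ν)

/-- The upper `s`-density `ℰ⁺_{w,s}(ν)` of a Borel measure `ν` w.r.t. the pseudo norm `w`. -/
def upperDensity {n : ℕ} (w : Pt n → ℝ) (s : ℝ) (ν : Measure (Pt n)) : ℝ≥0∞ :=
  ⨅ (r : ℝ) (_ : 0 < r),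
    ⨆ (U : Set (Pt n)) (_ : IsCompact U) (_ : Convex ℝ U)
      (_ : ENNReal.ofReal r ≤ pdiam w U), ν U / pdiam w U ^ s

/-- The upper convex `s`-density `D^s_{w,c}(E, x)` of `E` at `x` w.r.t. `w`. -/
def upperConvexDensity {n : ℕ} (w : Pt n → ℝ) (s : ℝ) (E : Set (Pt n)) (x : Pt n) :
    ℝ≥0∞ :=
  ⨅ (r : ℝ) (_ : 0 < r),
    ⨆ (U : Set (Pt n)) (_ : Convex ℝ U) (_ : x ∈ U) (_ : 0 < pdiam w U)
      (_ : pdiam w U ≤ ENNReal.ofReal r), Hw w s (E ∩ U) / pdiam w U ^ s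

/-- The pseudo Hausdorff dimension `dim_H^w E = inf {s ≥ 0 : ℋ^s_w(E) = 0}`. -/
def dimHw {n : ℕ} (w : Pt n → ℝ) (E : Set (Pt n)) : ℝ≥0∞ :=
  ⨅ (t : ℝ≥0) (_ : Hw w (t : ℝ) E = 0), (t : ℝ≥0∞)

/-- `𝒱` is a Vitali class for `E` w.r.t. `w`. -/
def VitaliClass {n : ℕ} (w : Pt n → ℝ) (𝒱 : Set (Set (Pt n))) (E : Set (Pt n)) : Prop :=
  ∀ x ∈ E, ∀ δ : ℝ, 0 < δ →
    ∃ U ∈ 𝒱, x ∈ U ∧ 0 < pdiam w U ∧ pdiam w U ≤ ENNReal.ofReal δ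

/-- The composite map `f_𝐢 = f_{i₁} ∘ ⋯ ∘ f_{i_m}` associated with a word of digits. -/
def fWord {n : ℕ} (A : Matrix (Fin n) (Fin n) ℝ) (i : List (Pt n)) (x : Pt n) : Pt n :=
  i.foldr (fun d y => fIFS A d y) x

section AuxLemmas

variable {n : ℕ}

lemma le_pdiam' (w : Pt n → ℝ) {U : Set (Pt n)} {x y : Pt n} (hx : x ∈ U) (hy : y ∈ U) :
    ENNReal.ofReal (w (x - y)) ≤ pdiam w U :=
  le_iSup_of_le x (le_iSup_of_le hx (le_iSup_of_le y (le_iSup_of_le hy le_rfl)))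

lemma pdiam_le' (w : Pt n → ℝ) {U : Set (Pt n)} {c : ℝ≥0∞}
    (h : ∀ x ∈ U, ∀ y ∈ U, ENNReal.ofReal (w (x - y)) ≤ c) : pdiam w U ≤ c :=
  iSup_le fun x => iSup_le fun hx => iSup_le fun y => iSup_le fun hy => h x hx y hy

lemma preHw_le_Hw (w : Pt n → ℝ) (s : ℝ) {δ : ℝ} (hδ : 0 < δ) (E : Set (Pt n)) :
    preHw w s δ E ≤ Hw w s E :=
  le_iSup_of_le δ (le_iSup_of_le hδ le_rfl)

lemma div_log_le {L nn c s : ℝ} (hL : 0 < L) (hn : 0 < nn) (hc : 0 < c)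
    (hs : 0 < Real.log s) (h : L / (nn * c) ≤ Real.log s) :
    L / (nn * Real.log s) ≤ c := by
  rw [div_le_iff₀ (by positivity)]
  rw [div_le_iff₀ (by positivity)] at h
  nlinarith

lemma le_div_log {L nn c s : ℝ} (hL : 0 < L) (hn : 0 < nn) (hc : 0 < c)
    (hs : 0 < Real.log s) (h : Real.log s ≤ L / (nn * c)) :
    c ≤ L / (nn * Real.log s) := by
  rw [le_div_iff₀ (by positivity)]
  rw [le_div_iff₀ (by positivity)] at h
  nlinarith

/-- Core lemma for the upper bound on `dimH`: if the pseudo Hausdorff measure vanishes,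
so does the Euclidean Hausdorff measure at any larger exponent. -/
lemma auxA (w : Pt n → ℝ) (hw0 : ∀ x, 0 ≤ w x) {C a b : ℝ}
    (hC : 0 < C) (ha : 0 < a) (hb : 0 < b)
    (hsmall : ∀ z : Pt n, ‖z‖ ≤ 1 → C⁻¹ * ‖z‖ ^ b ≤ w z)
    (hbigl : ∀ z : Pt n, 1 < ‖z‖ → C⁻¹ * ‖z‖ ^ a ≤ w z)
    (E : Set (Pt n)) {t : ℝ≥0} (hHw : Hw w (t : ℝ) E = 0)
    {d : ℝ≥0} (hd : b * (t : ℝ) < (d : ℝ)) : μH[(d : ℝ)] E = 0 := by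
  have hC' : (0:ℝ) < C⁻¹ := inv_pos.2 hC
  have het : 0 ≤ (d : ℝ) / b - (t : ℝ) := by
    rw [sub_nonneg, le_div_iff₀ hb]
    nlinarith
  rw [MeasureTheory.Measure.hausdorffMeasure_apply]
  refine le_antisymm (iSup₂_le fun r hr => ?_) zero_le
  refine ENNReal.le_of_forall_pos_le_add fun η hη _ => ?_
  rw [zero_add]
  set r' : ℝ≥0∞ := min r 1 with hr'
  have hr'0 : 0 < r' := lt_min hr zero_lt_one
  have hr'top : r' ≠ ∞ := ((min_le_right r 1).trans_lt (by norm_num)).ne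
  set ρ : ℝ := r'.toReal with hρdef
  have hρ : 0 < ρ := ENNReal.toReal_pos hr'0.ne' hr'top
  have hρr : ENNReal.ofReal ρ ≤ r := by
    rw [hρdef, ENNReal.ofReal_toReal hr'top]; exact min_le_left _ _
  set δ : ℝ := min (C⁻¹ / 2) (ρ ^ b / C) with hδdef
  have hδ : 0 < δ := lt_min (by positivity) (by positivity)
  have hδle : δ ≤ C⁻¹ / 2 := min_le_left _ _
  have hδle2 : δ ≤ ρ ^ b / C := min_le_right _ _
  -- any vector with small pseudo norm has small Euclidean norm
  have hnorm1 : ∀ z : Pt n, w z ≤ δ → ‖z‖ ≤ 1 := by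
    intro z hz
    by_contra hgt
    push_neg at hgt
    have h1 : C⁻¹ * ‖z‖ ^ a ≤ δ := (hbigl z hgt).trans hz
    have h2 : (1:ℝ) < ‖z‖ ^ a :=
      (Real.one_lt_rpow_iff_of_pos (by positivity)).2 (Or.inl ⟨hgt, ha⟩)
    nlinarith
  have hnormb : ∀ z : Pt n, w z ≤ δ → ‖z‖ ^ b ≤ C * w z := by
    intro z hz
    have h1 := hsmall z (hnorm1 z hz)
    have h2 := mul_le_mul_of_nonneg_left h1 hC.le
    rw [← mul_assoc, mul_inv_cancel₀ hC.ne', one_mul] at h2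
    exact h2
  have hnormb' : ∀ z : Pt n, w z ≤ δ → ‖z‖ ≤ (C * w z) ^ (1/b) := by
    intro z hz
    have h0 : ‖z‖ = (‖z‖ ^ b) ^ (1/b) := by
      rw [← Real.rpow_mul (norm_nonneg z), mul_one_div_cancel hb.ne', Real.rpow_one]
    rw [h0]
    exact Real.rpow_le_rpow (by positivity) (hnormb z hz) (by positivity)
  -- extract a good cover from vanishing of `preHw`
  have hpre : preHw w (t:ℝ) δ E = 0 :=
    le_antisymm (hHw ▸ preHw_le_Hw w (t:ℝ) hδ E) zero_le
  set OC : ℝ≥0∞ := ENNReal.ofReal C with hOC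
  have hOC0 : OC ≠ 0 := (ENNReal.ofReal_pos.2 hC).ne'
  have hOCt : OC ≠ ∞ := ENNReal.ofReal_ne_top
  set K : ℝ≥0∞ := (OC * ENNReal.ofReal δ) ^ ((d : ℝ)/b - (t : ℝ)) * OC ^ (t : ℝ) with hK
  have hK0 : K ≠ 0 := by
    apply mul_ne_zero
    · exact (ENNReal.rpow_pos (ENNReal.mul_pos hOC0 (ENNReal.ofReal_pos.2 hδ).ne')
        (ENNReal.mul_ne_top hOCt ENNReal.ofReal_ne_top)).ne'
    · exact (ENNReal.rpow_pos (ENNReal.ofReal_pos.2 hC) hOCt).ne'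
  have hKtop : K ≠ ∞ := by
    apply ENNReal.mul_ne_top
    · exact ENNReal.rpow_ne_top_of_nonneg het (ENNReal.mul_ne_top hOCt ENNReal.ofReal_ne_top)
    · exact ENNReal.rpow_ne_top_of_nonneg t.coe_nonneg hOCt
  set θ : ℝ≥0∞ := (η : ℝ≥0∞) / K with hθ
  have hθ0 : 0 < θ := ENNReal.div_pos (by exact_mod_cast hη.ne') hKtop
  have hlt : preHw w (t:ℝ) δ E < θ := hpre ▸ hθ0
  rw [preHw] at hlt
  simp only [iInf_lt_iff] at hlt
  obtain ⟨U, hUcov, hUd, hUsum⟩ := hlt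
  have hwUδ : ∀ i, ∀ x ∈ U i, ∀ y ∈ U i, w (x - y) ≤ δ := by
    intro i x hx y hy
    have h1 := (le_pdiam' w hx hy).trans (hUd i)
    exact (ENNReal.ofReal_le_ofReal_iff hδ.le).1 h1
  have hρb : (C * δ) ^ (1/b) ≤ ρ := by
    have h1 : C * δ ≤ ρ ^ b := by
      rw [le_div_iff₀ hC] at hδle2; linarith [hδle2]
    calc (C * δ) ^ (1/b) ≤ (ρ ^ b) ^ (1/b) :=
          Real.rpow_le_rpow (by positivity) h1 (by positivity)
      _ = ρ := by rw [← Real.rpow_mul hρ.le, mul_one_div_cancel hb.ne', Real.rpow_one]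
  have hUr : ∀ i, EMetric.diam (U i) ≤ r := by
    intro i
    refine le_trans (EMetric.diam_le fun x hx y hy => ?_) hρr
    rw [edist_dist, dist_eq_norm]
    refine ENNReal.ofReal_le_ofReal (le_trans (hnormb' _ (hwUδ i x hx y hy)) ?_)
    refine le_trans (Real.rpow_le_rpow (mul_nonneg hC.le (hw0 _))
      (mul_le_mul_of_nonneg_left (hwUδ i x hx y hy) hC.le) (by positivity)) hρb
  refine le_trans ((iInf_le _ U).trans ((iInf_le _ hUcov).trans (iInf_le _ hUr))) ?_
  have hterm : ∀ i, (⨆ _ : (U i).Nonempty, EMetric.diam (U i) ^ (d : ℝ))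
      ≤ K * pdiam w (U i) ^ (t : ℝ) := by
    intro i
    refine iSup_le fun _ => ?_
    have hD : EMetric.diam (U i) ≤ (OC * pdiam w (U i)) ^ (1/b) := by
      refine EMetric.diam_le fun x hx y hy => ?_
      rw [edist_dist, dist_eq_norm]
      calc ENNReal.ofReal ‖x - y‖
          ≤ ENNReal.ofReal ((C * w (x - y)) ^ (1/b)) :=
            ENNReal.ofReal_le_ofReal (hnormb' _ (hwUδ i x hx y hy))
        _ = (ENNReal.ofReal (C * w (x - y))) ^ (1/b) :=
            (ENNReal.ofReal_rpow_of_nonneg (mul_nonneg hC.le (hw0 _)) (by positivity)).symm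
        _ = (OC * ENNReal.ofReal (w (x - y))) ^ (1/b) := by
            rw [ENNReal.ofReal_mul hC.le]
        _ ≤ (OC * pdiam w (U i)) ^ (1/b) :=
            ENNReal.rpow_le_rpow (mul_le_mul_right (le_pdiam' w hx hy) _) (by positivity)
    have hPd : pdiam w (U i) ≤ ENNReal.ofReal δ :=
      pdiam_le' w fun x hx y hy => ENNReal.ofReal_le_ofReal (hwUδ i x hx y hy)
    calc EMetric.diam (U i) ^ (d : ℝ)
        ≤ ((OC * pdiam w (U i)) ^ (1/b)) ^ (d : ℝ) :=
          ENNReal.rpow_le_rpow hD d.coe_nonneg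
      _ = (OC * pdiam w (U i)) ^ ((d : ℝ)/b) := by
          rw [← ENNReal.rpow_mul]; congr 1; ring
      _ = (OC * pdiam w (U i)) ^ ((d : ℝ)/b - (t : ℝ)) * (OC * pdiam w (U i)) ^ (t : ℝ) := by
          rw [← ENNReal.rpow_add_of_nonneg _ _ het t.coe_nonneg]; congr 1; ring
      _ ≤ (OC * ENNReal.ofReal δ) ^ ((d : ℝ)/b - (t : ℝ)) * (OC * pdiam w (U i)) ^ (t : ℝ) := by
          gcongr
      _ = K * pdiam w (U i) ^ (t : ℝ) := by
          rw [hK, ENNReal.mul_rpow_of_nonneg _ _ t.coe_nonneg]; ring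
  calc ∑' i, ⨆ _ : (U i).Nonempty, EMetric.diam (U i) ^ (d : ℝ)
      ≤ ∑' i, K * pdiam w (U i) ^ (t : ℝ) := ENNReal.tsum_le_tsum hterm
    _ = K * ∑' i, pdiam w (U i) ^ (t : ℝ) := ENNReal.tsum_mul_left
    _ ≤ K * θ := mul_le_mul_right hUsum.le _
    _ = η := ENNReal.mul_div_cancel hK0 hKtop

/-- Core lemma for the lower bound on `dimH`: if the Euclidean Hausdorff measure vanishes,
so does the pseudo Hausdorff measure at the corresponding exponent. -/
lemma auxB (w : Pt n → ℝ) (hw0 : ∀ x, 0 ≤ w x) {C a : ℝ}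
    (hC : 0 < C) (ha : 0 < a)
    (hupp : ∀ z : Pt n, ‖z‖ ≤ 1 → w z ≤ C * ‖z‖ ^ a)
    (E : Set (Pt n)) {c : ℝ≥0} (hc : 0 < c)
    (hμ : μH[a * (c : ℝ)] E = 0) : Hw w (c : ℝ) E = 0 := by
  refine le_antisymm (iSup₂_le fun δ hδ => ?_) zero_le
  refine ENNReal.le_of_forall_pos_le_add fun η hη _ => ?_
  rw [zero_add]
  set ρ : ℝ := min 1 ((δ / C) ^ (1/a)) with hρdef
  have hρ : 0 < ρ := lt_min one_pos (by positivity)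
  rw [MeasureTheory.Measure.hausdorffMeasure_apply] at hμ
  have hinf : (⨅ (U : ℕ → Set (Pt n)) (_ : E ⊆ ⋃ i, U i)
      (_ : ∀ i, EMetric.diam (U i) ≤ ENNReal.ofReal ρ),
      ∑' i, ⨆ _ : (U i).Nonempty, EMetric.diam (U i) ^ (a * (c : ℝ))) = 0 := by
    refine le_antisymm (le_trans (le_iSup₂ (f := fun (r : ℝ≥0∞) (_ : 0 < r) =>
      ⨅ (U : ℕ → Set (Pt n)) (_ : E ⊆ ⋃ i, U i)
        (_ : ∀ i, EMetric.diam (U i) ≤ r),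
        ∑' i, ⨆ _ : (U i).Nonempty, EMetric.diam (U i) ^ (a * (c : ℝ)))
      (ENNReal.ofReal ρ) (ENNReal.ofReal_pos.2 hρ)) hμ.le) zero_le
  set OC : ℝ≥0∞ := ENNReal.ofReal C with hOC
  have hOC0 : OC ≠ 0 := (ENNReal.ofReal_pos.2 hC).ne'
  have hOCt : OC ≠ ∞ := ENNReal.ofReal_ne_top
  set K : ℝ≥0∞ := OC ^ (c : ℝ) with hK
  have hK0 : K ≠ 0 := (ENNReal.rpow_pos (ENNReal.ofReal_pos.2 hC) hOCt).ne'
  have hKtop : K ≠ ∞ := ENNReal.rpow_ne_top_of_nonneg c.coe_nonneg hOCt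
  set θ : ℝ≥0∞ := (η : ℝ≥0∞) / K with hθ
  have hθ0 : 0 < θ := ENNReal.div_pos (by exact_mod_cast hη.ne') hKtop
  have hlt : (⨅ (U : ℕ → Set (Pt n)) (_ : E ⊆ ⋃ i, U i)
      (_ : ∀ i, EMetric.diam (U i) ≤ ENNReal.ofReal ρ),
      ∑' i, ⨆ _ : (U i).Nonempty, EMetric.diam (U i) ^ (a * (c : ℝ))) < θ := hinf ▸ hθ0
  simp only [iInf_lt_iff] at hlt
  obtain ⟨U, hUcov, hUd, hUsum⟩ := hlt
  have hpd : ∀ i, pdiam w (U i) ≤ OC * EMetric.diam (U i) ^ a := by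
    intro i
    refine pdiam_le' w fun x hx y hy => ?_
    have hxy : ENNReal.ofReal ‖x - y‖ ≤ EMetric.diam (U i) := by
      rw [← dist_eq_norm, ← edist_dist]; exact EMetric.edist_le_diam_of_mem hx hy
    have h1 : ‖x - y‖ ≤ 1 := by
      have h2 : ENNReal.ofReal ‖x - y‖ ≤ ENNReal.ofReal 1 :=
        hxy.trans ((hUd i).trans (ENNReal.ofReal_le_ofReal (min_le_left _ _)))
      exact (ENNReal.ofReal_le_ofReal_iff one_pos.le).1 h2
    calc ENNReal.ofReal (w (x - y)) ≤ ENNReal.ofReal (C * ‖x - y‖ ^ a) :=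
          ENNReal.ofReal_le_ofReal (hupp _ h1)
      _ = OC * (ENNReal.ofReal ‖x - y‖) ^ a := by
          rw [ENNReal.ofReal_mul hC.le, ENNReal.ofReal_rpow_of_nonneg (norm_nonneg _) ha.le]
      _ ≤ OC * EMetric.diam (U i) ^ a :=
          mul_le_mul_right (ENNReal.rpow_le_rpow hxy ha.le) _
  have hρa : ρ ^ a ≤ δ / C := by
    calc ρ ^ a ≤ ((δ / C) ^ (1/a)) ^ a :=
          Real.rpow_le_rpow hρ.le (min_le_right _ _) ha.le
      _ = δ / C := by
          rw [← Real.rpow_mul (by positivity), one_div_mul_cancel ha.ne', Real.rpow_one]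
  have hpdδ : ∀ i, pdiam w (U i) ≤ ENNReal.ofReal δ := by
    intro i
    calc pdiam w (U i) ≤ OC * EMetric.diam (U i) ^ a := hpd i
      _ ≤ OC * (ENNReal.ofReal ρ) ^ a :=
          mul_le_mul_right (ENNReal.rpow_le_rpow (hUd i) ha.le) _
      _ = OC * ENNReal.ofReal (ρ ^ a) := by
          rw [ENNReal.ofReal_rpow_of_nonneg hρ.le ha.le]
      _ ≤ OC * ENNReal.ofReal (δ / C) :=
          mul_le_mul_right (ENNReal.ofReal_le_ofReal hρa) _
      _ = ENNReal.ofReal (C * (δ / C)) := by rw [ENNReal.ofReal_mul hC.le]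
      _ = ENNReal.ofReal δ := by rw [mul_div_cancel₀ _ hC.ne']
  rw [preHw]
  refine le_trans ((iInf_le _ U).trans ((iInf_le _ hUcov).trans (iInf_le _ hpdδ))) ?_
  have hterm : ∀ i, pdiam w (U i) ^ (c : ℝ)
      ≤ K * ⨆ _ : (U i).Nonempty, EMetric.diam (U i) ^ (a * (c : ℝ)) := by
    intro i
    rcases (U i).eq_empty_or_nonempty with he | hne
    · rw [he]
      have : pdiam w (∅ : Set (Pt n)) = 0 := by simp [pdiam]
      rw [this, ENNReal.zero_rpow_of_pos (by exact_mod_cast hc)]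
      exact zero_le
    · rw [iSup_pos hne]
      calc pdiam w (U i) ^ (c : ℝ) ≤ (OC * EMetric.diam (U i) ^ a) ^ (c : ℝ) :=
            ENNReal.rpow_le_rpow (hpd i) c.coe_nonneg
        _ = K * EMetric.diam (U i) ^ (a * (c : ℝ)) := by
            rw [ENNReal.mul_rpow_of_nonneg _ _ c.coe_nonneg, ENNReal.rpow_mul]
  calc ∑' i, pdiam w (U i) ^ (c : ℝ)
      ≤ ∑' i, K * ⨆ _ : (U i).Nonempty, EMetric.diam (U i) ^ (a * (c : ℝ)) :=
        ENNReal.tsum_le_tsum hterm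
    _ = K * ∑' i, ⨆ _ : (U i).Nonempty, EMetric.diam (U i) ^ (a * (c : ℝ)) :=
        ENNReal.tsum_mul_left
    _ ≤ K * θ := mul_le_mul_right hUsum.le _
    _ = η := ENNReal.mul_div_cancel hK0 hKtop

end AuxLemmas

/-- Theorem 2.5 (He–Lau): comparison between the pseudo Hausdorff dimension and the
classical Hausdorff dimension, via the extreme moduli of eigenvalues of `A`. -/
theorem stmt19 {n : ℕ} (hn : 0 < n) (A : Matrix (Fin n) (Fin n) ℝ)
    (hA : IsExpandingMatrix A)
    (hAnorm : ∀ x : Pt n, ‖x‖ ≤ ‖mapp A x‖)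
    (hAeq : ∀ x : Pt n, ‖x‖ = ‖mapp A x‖ → x = 0)
    (w : Pt n → ℝ) (hw : IsPseudoNorm A w)
    (lmax lmin : ℝ)
    (hmax : IsGreatest ((fun z : ℂ => ‖z‖) '' spectrum ℂ (A.map (fun a => (a : ℂ)))) lmax)
    (hmin : IsLeast ((fun z : ℂ => ‖z‖) '' spectrum ℂ (A.map (fun a => (a : ℂ)))) lmin)
    (hcomp : ∀ ε : ℝ, 0 < ε → ε < lmin - 1 → ∃ C > (0 : ℝ),
      (∀ x : Pt n, 1 < ‖x‖ →
        C⁻¹ * ‖x‖ ^ (Real.log |A.det| / (n * Real.log (lmax + ε))) ≤ w x ∧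
        w x ≤ C * ‖x‖ ^ (Real.log |A.det| / (n * Real.log (lmin - ε)))) ∧
      (∀ x : Pt n, ‖x‖ ≤ 1 →
        C⁻¹ * ‖x‖ ^ (Real.log |A.det| / (n * Real.log (lmin - ε))) ≤ w x ∧
        w x ≤ C * ‖x‖ ^ (Real.log |A.det| / (n * Real.log (lmax + ε)))))
    (E : Set (Pt n)) :
    ENNReal.ofReal (Real.log |A.det| / (n * Real.log lmax)) * dimHw w E ≤ dimH E ∧
    dimH E ≤ ENNReal.ofReal (Real.log |A.det| / (n * Real.log lmin)) * dimHw w E := by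
  classical
  set L := Real.log |A.det| with hLdef
  have hn' : (0:ℝ) < n := by exact_mod_cast hn
  obtain ⟨μm, hμmem, hμeq⟩ := hmin.1
  have hlmin1 : 1 < lmin := by rw [← hμeq]; exact hA μm hμmem
  have hlmaxmin : lmin ≤ lmax := hmax.2 hmin.1
  have hlmax1 : 1 < lmax := lt_of_lt_of_le hlmin1 hlmaxmin
  have hloglmin : 0 < Real.log lmin := Real.log_pos hlmin1
  have hloglmax : 0 < Real.log lmax := Real.log_pos hlmax1
  -- Step 1 : L = log |det A| is positive
  have hLpos : 0 < L := by
    set ε₀ : ℝ := (lmin - 1)/2 with hε₀def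
    have hε₀ : 0 < ε₀ := by rw [hε₀def]; linarith
    have hε₀' : ε₀ < lmin - 1 := by rw [hε₀def]; linarith
    obtain ⟨C, hC, hbig, _⟩ := hcomp ε₀ hε₀ hε₀'
    obtain ⟨C', hC', α₁, hα₁, α₂, hα₂, hbig', _⟩ := hw.comparable
    by_contra hL0
    push_neg at hL0
    have hlog : 0 < Real.log (lmin - ε₀) := Real.log_pos (by rw [hε₀def]; linarith)
    have hb0 : L / (n * Real.log (lmin - ε₀)) ≤ 0 :=
      div_nonpos_iff.2 (Or.inr ⟨hL0, by positivity⟩)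
    set R : ℝ := max 2 ((C*C') ^ (α₁⁻¹) + 1) with hRdef
    have hR2 : (2:ℝ) ≤ R := le_max_left _ _
    have hR1 : 1 < R := by linarith
    set x : Pt n := R • (EuclideanSpace.single (⟨0, hn⟩ : Fin n) (1:ℝ)) with hxdef
    have hxnorm : ‖x‖ = R := by
      rw [hxdef, norm_smul, EuclideanSpace.norm_single, norm_one, mul_one,
        Real.norm_eq_abs, abs_of_pos (by linarith)]
    have hlow := (hbig' x (by rw [hxnorm]; exact hR1)).1
    have hupp := (hbig x (by rw [hxnorm]; exact hR1)).2
    rw [hxnorm] at hlow hupp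
    have hlt1 : R ^ (L / (n * Real.log (lmin - ε₀))) ≤ 1 :=
      Real.rpow_le_one_of_one_le_of_nonpos (by linarith) hb0
    have hwle : w x ≤ C := by
      calc w x ≤ C * R ^ (L / (n * Real.log (lmin - ε₀))) := hupp
        _ ≤ C * 1 := mul_le_mul_of_nonneg_left hlt1 hC.le
        _ = C := mul_one C
    have h4 : C'⁻¹ * R ^ α₁ ≤ C := hlow.trans hwle
    have h5 : R ^ α₁ ≤ C' * C := by
      have h6 := mul_le_mul_of_nonneg_left h4 hC'.le
      rwa [← mul_assoc, mul_inv_cancel₀ hC'.ne', one_mul] at h6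
    have hkey : C * C' < R ^ α₁ := by
      have h0 : (C*C') ^ (α₁⁻¹) < R := by
        have := le_max_right 2 ((C*C') ^ (α₁⁻¹) + 1)
        rw [← hRdef] at this; linarith
      calc C * C' = ((C*C') ^ (α₁⁻¹)) ^ α₁ := by
            rw [← Real.rpow_mul (by positivity), inv_mul_cancel₀ hα₁.ne', Real.rpow_one]
        _ < R ^ α₁ := Real.rpow_lt_rpow (by positivity) h0 hα₁
    nlinarith
  -- the two one-sided claims, for each admissible ε
  have claim2 : ∀ ε : ℝ, 0 < ε → ε < lmin - 1 →
      dimH E ≤ ENNReal.ofReal (L / (n * Real.log (lmin - ε))) * dimHw w E := by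
    intro ε hε hε'
    obtain ⟨C, hC, hbig, hsmall⟩ := hcomp ε hε hε'
    have hla : 0 < Real.log (lmax + ε) := Real.log_pos (by linarith)
    have hlb : 0 < Real.log (lmin - ε) := Real.log_pos (by linarith)
    set a : ℝ := L / (n * Real.log (lmax + ε)) with hadef
    set b : ℝ := L / (n * Real.log (lmin - ε)) with hbdef
    have ha : 0 < a := div_pos hLpos (mul_pos hn' hla)
    have hb : 0 < b := div_pos hLpos (mul_pos hn' hlb)
    refine dimH_le fun d' hd' => ?_
    by_contra hcon
    push_neg at hcon
    have hbne : ENNReal.ofReal b ≠ 0 := (ENNReal.ofReal_pos.2 hb).ne'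
    have hXlt : dimHw w E < (d' : ℝ≥0∞) / ENNReal.ofReal b :=
      (ENNReal.lt_div_iff_mul_lt (Or.inl hbne) (Or.inl ENNReal.ofReal_ne_top)).2
        (by rwa [mul_comm])
    rw [dimHw] at hXlt
    simp only [iInf_lt_iff] at hXlt
    obtain ⟨t, hHwt, htlt⟩ := hXlt
    have hmul : ENNReal.ofReal b * (t : ℝ≥0∞) < (d' : ℝ≥0∞) := by
      have := (ENNReal.lt_div_iff_mul_lt (Or.inl hbne) (Or.inl ENNReal.ofReal_ne_top)).1 htlt
      rwa [mul_comm] at this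
    have hreal : b * (t : ℝ) < (d' : ℝ) := by
      rw [← ENNReal.ofReal_coe_nnreal, ← ENNReal.ofReal_mul hb.le,
        ← ENNReal.ofReal_coe_nnreal (p := d')] at hmul
      exact (ENNReal.ofReal_lt_ofReal_iff_of_nonneg
        (mul_nonneg hb.le t.coe_nonneg)).1 hmul
    have hμ0 := auxA w hw.nonneg hC ha hb
      (fun z hz => (hsmall z hz).1) (fun z hz => (hbig z hz).1) E hHwt hreal
    rw [hμ0] at hd'
    exact ENNReal.zero_ne_top hd'
  have claim1 : ∀ ε : ℝ, 0 < ε → ε < lmin - 1 →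
      ENNReal.ofReal (L / (n * Real.log (lmax + ε))) * dimHw w E ≤ dimH E := by
    intro ε hε hε'
    obtain ⟨C, hC, hbig, hsmall⟩ := hcomp ε hε hε'
    have hla : 0 < Real.log (lmax + ε) := Real.log_pos (by linarith)
    set a : ℝ := L / (n * Real.log (lmax + ε)) with hadef
    have ha : 0 < a := div_pos hLpos (mul_pos hn' hla)
    have hane : ENNReal.ofReal a ≠ 0 := (ENNReal.ofReal_pos.2 ha).ne'
    by_contra hcon
    push_neg at hcon
    have hdiv : dimH E / ENNReal.ofReal a < dimHw w E :=
      (ENNReal.div_lt_iff (Or.inl hane) (Or.inl ENNReal.ofReal_ne_top)).2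
        (by rwa [mul_comm])
    obtain ⟨cnn, hc1, hc2⟩ := ENNReal.lt_iff_exists_nnreal_btwn.1 hdiv
    have hcdim : dimH E < ENNReal.ofReal a * (cnn : ℝ≥0∞) := by
      have := (ENNReal.div_lt_iff (Or.inl hane) (Or.inl ENNReal.ofReal_ne_top)).1 hc1
      rwa [mul_comm] at this
    have hcnn0 : 0 < cnn := by
      rcases eq_zero_or_pos cnn with h | h
      · rw [h] at hcdim; simp at hcdim
      · exact h
    have hμ : μH[a * (cnn : ℝ)] E = 0 := by
      have hlt : dimH E < (((a * (cnn : ℝ)).toNNReal : ℝ≥0) : ℝ≥0∞) := by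
        rw [show (((a * (cnn : ℝ)).toNNReal : ℝ≥0) : ℝ≥0∞) = ENNReal.ofReal (a * (cnn : ℝ))
          from rfl, ENNReal.ofReal_mul ha.le, ENNReal.ofReal_coe_nnreal]
        exact hcdim
      have h0 := hausdorffMeasure_of_dimH_lt hlt
      rwa [Real.coe_toNNReal _ (by positivity)] at h0
    have hHw0 := auxB w hw.nonneg hC ha (fun z hz => (hsmall z hz).2) E hcnn0 hμ
    have hle : dimHw w E ≤ (cnn : ℝ≥0∞) := by
      rw [dimHw]
      exact iInf_le_of_le cnn (iInf_le_of_le hHw0 le_rfl)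
    exact absurd (hle.trans_lt hc2) (lt_irrefl _)
  constructor
  · -- lower bound
    by_cases hX0 : dimHw w E = 0
    · simp [hX0]
    by_cases hXtop : dimHw w E = ∞
    · set ε₁ : ℝ := (lmin - 1)/2 with hε₁def
      have hε₁ : 0 < ε₁ := by rw [hε₁def]; linarith
      have hε₁' : ε₁ < lmin - 1 := by rw [hε₁def]; linarith
      have hla : 0 < Real.log (lmax + ε₁) := Real.log_pos (by linarith)
      have h1 := claim1 ε₁ hε₁ hε₁'
      rw [hXtop, ENNReal.mul_top
        (ENNReal.ofReal_pos.2 (div_pos hLpos (mul_pos hn' hla))).ne'] at h1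
      rw [hXtop, ENNReal.mul_top (ENNReal.ofReal_pos.2
        (div_pos hLpos (mul_pos hn' hloglmax))).ne']
      exact h1
    · set a0 : ℝ := L / (n * Real.log lmax) with ha0def
      have ha0 : 0 < a0 := div_pos hLpos (mul_pos hn' hloglmax)
      have key : ∀ k : ℕ, ENNReal.ofReal (a0 * (1 - 1/((k:ℝ)+2))) * dimHw w E ≤ dimH E := by
        intro k
        set c : ℝ := a0 * (1 - 1/((k:ℝ)+2)) with hcdef
        have hfrac1 : (1:ℝ)/((k:ℝ)+2) < 1 := by
          rw [div_lt_one (by positivity)]; linarith [Nat.cast_nonneg (α := ℝ) k]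
        have hfrac0 : (0:ℝ) < 1/((k:ℝ)+2) := by positivity
        have hcpos : 0 < c := mul_pos ha0 (by linarith)
        have hclt : c < a0 := by
          rw [hcdef]; nlinarith
        set Ec : ℝ := Real.exp (L / (n * c)) with hEcdef
        have hEcgt : lmax < Ec := by
          have h2 : Real.log lmax < L / (n*c) := by
            rw [lt_div_iff₀ (by positivity)]
            rw [ha0def, lt_div_iff₀ (mul_pos hn' hloglmax)] at hclt
            nlinarith
          calc lmax = Real.exp (Real.log lmax) := (Real.exp_log (by linarith)).symm
            _ < Ec := Real.exp_lt_exp.2 h2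
        set ε : ℝ := min ((Ec - lmax)/2) ((lmin-1)/2) with hεdef
        have hε0 : 0 < ε := lt_min (by linarith) (by linarith)
        have hε1 : ε < lmin - 1 :=
          lt_of_le_of_lt (min_le_right _ _) (by linarith)
        have hle : lmax + ε ≤ Ec := by
          have h3 : ε ≤ (Ec - lmax)/2 := min_le_left _ _
          linarith
        have hbound : c ≤ L / (n * Real.log (lmax + ε)) := by
          apply le_div_log hLpos hn' hcpos (Real.log_pos (by linarith))
          calc Real.log (lmax + ε) ≤ Real.log Ec :=
                Real.log_le_log (by linarith) hle
            _ = L/(n*c) := Real.log_exp _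
        calc ENNReal.ofReal c * dimHw w E
            ≤ ENNReal.ofReal (L/(n*Real.log (lmax+ε))) * dimHw w E :=
              mul_le_mul_left (ENNReal.ofReal_le_ofReal hbound) _
          _ ≤ dimH E := claim1 ε hε0 hε1
      have h0 : Filter.Tendsto (fun k : ℕ => 1/((k:ℝ)+2)) Filter.atTop (nhds 0) := by
        have h1 : Filter.Tendsto (fun k : ℕ => ((k:ℝ)+2)) Filter.atTop Filter.atTop :=
          Filter.tendsto_atTop_add_const_right _ 2 tendsto_natCast_atTop_atTop
        simpa [one_div, Pi.inv_def] using h1.inv_tendsto_atTop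
      have h1 : Filter.Tendsto (fun k : ℕ => a0 * (1 - 1/((k:ℝ)+2)))
          Filter.atTop (nhds a0) := by
        have := tendsto_const_nhds (x := a0) (f := Filter.atTop (α := ℕ)) |>.mul
          ((tendsto_const_nhds (x := (1:ℝ))).sub h0)
        simpa using this
      have htend : Filter.Tendsto
          (fun k : ℕ => ENNReal.ofReal (a0 * (1 - 1/((k:ℝ)+2))) * dimHw w E)
          Filter.atTop (nhds (ENNReal.ofReal a0 * dimHw w E)) :=
        ENNReal.Tendsto.mul_const (ENNReal.tendsto_ofReal h1) (Or.inr hXtop)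
      exact le_of_tendsto' htend key
  · -- upper bound
    by_cases hXtop : dimHw w E = ∞
    · rw [hXtop, ENNReal.mul_top (ENNReal.ofReal_pos.2
        (div_pos hLpos (mul_pos hn' hloglmin))).ne']
      exact le_top
    · set b0 : ℝ := L / (n * Real.log lmin) with hb0def
      have hb0 : 0 < b0 := div_pos hLpos (mul_pos hn' hloglmin)
      have key : ∀ k : ℕ, dimH E ≤ ENNReal.ofReal (b0 + 1/((k:ℝ)+1)) * dimHw w E := by
        intro k
        set c : ℝ := b0 + 1/((k:ℝ)+1) with hcdef
        have hfrac0 : (0:ℝ) < 1/((k:ℝ)+1) := by positivity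
        have hcgt : b0 < c := by rw [hcdef]; linarith
        have hcpos : 0 < c := hb0.trans hcgt
        set Lc : ℝ := Real.exp (L / (n * c)) with hLcdef
        have hLc1 : 1 < Lc := by
          rw [hLcdef, ← Real.exp_zero]
          exact Real.exp_lt_exp.2 (by positivity)
        have hLclt : Lc < lmin := by
          have h2 : L / (n*c) < Real.log lmin := by
            rw [div_lt_iff₀ (by positivity)]
            rw [hb0def, div_lt_iff₀ (mul_pos hn' hloglmin)] at hcgt
            nlinarith
          calc Lc = Real.exp (L/(n*c)) := rfl
            _ < Real.exp (Real.log lmin) := Real.exp_lt_exp.2 h2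
            _ = lmin := Real.exp_log (by linarith)
        set ε : ℝ := (lmin - Lc)/2 with hεdef
        have hε0 : 0 < ε := by rw [hεdef]; linarith
        have hε1 : ε < lmin - 1 := by rw [hεdef]; linarith
        have hLcle : Lc ≤ lmin - ε := by rw [hεdef]; linarith
        have hbound : L / (n * Real.log (lmin - ε)) ≤ c := by
          apply div_log_le hLpos hn' hcpos (Real.log_pos (by linarith))
          calc L/(n*c) = Real.log Lc := (Real.log_exp _).symm
            _ ≤ Real.log (lmin - ε) := Real.log_le_log (Real.exp_pos _) hLcle
        calc dimH E ≤ ENNReal.ofReal (L / (n * Real.log (lmin - ε))) * dimHw w E :=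
              claim2 ε hε0 hε1
          _ ≤ ENNReal.ofReal c * dimHw w E :=
              mul_le_mul_left (ENNReal.ofReal_le_ofReal hbound) _
      have h1 : Filter.Tendsto (fun k : ℕ => b0 + 1/((k:ℝ)+1))
          Filter.atTop (nhds b0) := by
        simpa using (tendsto_const_nhds (x := b0) (f := Filter.atTop (α := ℕ))).add
          tendsto_one_div_add_atTop_nhds_zero_nat
      have htend : Filter.Tendsto
          (fun k : ℕ => ENNReal.ofReal (b0 + 1/((k:ℝ)+1)) * dimHw w E)
          Filter.atTop (nhds (ENNReal.ofReal b0 * dimHw w E)) :=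
        ENNReal.Tendsto.mul_const (ENNReal.tendsto_ofReal h1) (Or.inr hXtop)
      exact ge_of_tendsto' htend key
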